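/- For all positive integers m and nonnegative integers a, b with a ≠ b: ∑_{i=1}^m H_{i+a-1}·H_{i+b-1} = (b−a)·∑_{i=1}^{m-1} H_{a+i-1}/(b+i) + (m+a)·H_{m+a-1}·H_{m+b-1} − a·H_a·H_b − (m+a−1)·H_{m+a-1} + a·H_a − (m+b)·H_{m+b-1} + (b+1)·H_b + 2m − 2, where H_n = ∑_{k=1}^n 1/k. -/

import Mathlib

open Finset

noncomputable def H (n : ℕ) : ℝ := ∑ k ∈ Finset.range n, 1 / ((k : ℝ) + 1)
noncomputable def H2 (n : ℕ) : ℝ := ∑ k ∈ Finset.range n, 1 / ((k : ℝ) + 1) ^ 2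

lemma H_succ (n : ℕ) : H (n + 1) = H n + 1 / ((n : ℝ) + 1) := by
  simp [H, Finset.sum_range_succ]

theorem stmt5 (m a b : ℕ) (hm : 0 < m) (hab : a ≠ b) :
    ∑ i ∈ Finset.Icc 1 m, H (i + a - 1) * H (i + b - 1)
      = ((b : ℝ) - a) * ∑ i ∈ Finset.Icc 1 (m - 1), H (a + i - 1) / ((b : ℝ) + i)
        + ((m : ℝ) + a) * H (m + a - 1) * H (m + b - 1)
        - (a : ℝ) * H a * H b
        - ((m : ℝ) + a - 1) * H (m + a - 1)
        + (a : ℝ) * H a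
        - ((m : ℝ) + b) * H (m + b - 1)
        + ((b : ℝ) + 1) * H b
        + 2 * (m : ℝ) - 2 := by
  clear hab
  obtain ⟨k, rfl⟩ : ∃ k, m = k + 1 := ⟨m - 1, (Nat.succ_pred_eq_of_pos hm).symm⟩
  clear hm
  induction k with
  | zero =>
    simp only [Nat.add_sub_cancel, Finset.Icc_self, Finset.sum_singleton,
      Nat.add_sub_cancel_left, show (1:ℕ) - 1 = 0 from rfl, show (1:ℕ)+a-1 = a from by omega,
      show (1:ℕ)+b-1 = b from by omega]
    simp only [show Finset.Icc 1 0 = (∅ : Finset ℕ) from rfl, Finset.sum_empty]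
    push_cast
    ring
  | succ k ih =>
    rw [Finset.sum_Icc_succ_top (by omega : 1 ≤ k + 1 + 1)]
    rw [ih]
    simp only [Nat.add_sub_cancel,
      show k + 1 + 1 + a - 1 = k + a + 1 from by omega,
      show k + 1 + 1 + b - 1 = k + b + 1 from by omega,
      show k + 1 + a - 1 = k + a from by omega,
      show k + 1 + b - 1 = k + b from by omega]
    rw [Finset.sum_Icc_succ_top (by omega : 1 ≤ k + 1),
      show a + (k + 1) - 1 = k + a from by omega]
    rw [H_succ (k + a), H_succ (k + b)]
    have h1 : ((k : ℝ) + a + 1) ≠ 0 := by positivity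
    have h2 : ((k : ℝ) + b + 1) ≠ 0 := by positivity
    have h3 : ((b : ℝ) + (k + 1)) ≠ 0 := by positivity
    push_cast
    field_simp
    ring
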